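/- Jeffrey likelihood is ordered oppositely to Kullback–Leibler divergence: for distributions σ, σ' on a finite type Y (both with full support on the support of ψ) and a nonempty multiset ψ of size K over Y, Multinomial[K](σ)(ψ) ≤ Multinomial[K](σ')(ψ) if and only if D_KL(flrn(ψ), σ) ≥ D_KL(flrn(ψ), σ'). -/

import Mathlib

open Finset

noncomputable def validity {X : Type*} [Fintype X] (ω p : X → ℝ) : ℝ := ∑ x, ω x * p x
noncomputable def updateD {X : Type*} [Fintype X] (ω p : X → ℝ) : X → ℝ :=
  fun x => ω x * p x / validity ω p
noncomputable def push {X Y : Type*} [Fintype X] (c : X → Y → ℝ) (ω : X → ℝ) : Y → ℝ :=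
  fun y => ∑ x, ω x * c x y
noncomputable def pull {X Y : Type*} [Fintype Y] (c : X → Y → ℝ) (q : Y → ℝ) : X → ℝ :=
  fun x => ∑ y, c x y * q y
noncomputable def dagger {X Y : Type*} [Fintype X] (c : X → Y → ℝ) (ω : X → ℝ) : Y → X → ℝ :=
  fun y x => ω x * c x y / push c ω y

def IsDist {X : Type*} [Fintype X] (ω : X → ℝ) : Prop :=
  (∀ x, 0 ≤ ω x) ∧ ∑ x, ω x = 1
def IsChannel {X Y : Type*} [Fintype Y] (c : X → Y → ℝ) : Prop :=
  ∀ x, IsDist (c x)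
def IsPred {X : Type*} (p : X → ℝ) : Prop := ∀ x, 0 ≤ p x ∧ p x ≤ 1

noncomputable def coefm {X : Type*} [Fintype X] [DecidableEq X] (K : ℕ) (φ : Sym X K) : ℝ :=
  (K.factorial : ℝ) / ∏ x, (((φ : Multiset X).count x).factorial : ℝ)
noncomputable def multinom {X : Type*} [Fintype X] [DecidableEq X] (K : ℕ) (ω : X → ℝ)
    (φ : Sym X K) : ℝ :=
  coefm K φ * ∏ x, ω x ^ ((φ : Multiset X).count x)
noncomputable def flrn {X : Type*} [DecidableEq X] (K : ℕ) (φ : Sym X K) : X → ℝ :=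
  fun x => ((φ : Multiset X).count x : ℝ) / K
def acc {X : Type*} {K : ℕ} (v : Fin K → X) : Sym X K :=
  ⟨Multiset.map v Finset.univ.val, by simp⟩
noncomputable def arr {X : Type*} [Fintype X] [DecidableEq X] {K : ℕ} (φ : Sym X K) :
    (Fin K → X) → ℝ :=
  fun v => if acc v = φ then 1 / coefm K φ else 0
noncomputable def Mchan {X Y : Type*} [Fintype X] [DecidableEq X] [Fintype Y] [DecidableEq Y]
    {K : ℕ} (c : X → Y → ℝ) : Sym X K → Sym Y K → ℝ :=
  fun φ ψ => ∑ v : Fin K → X, arr φ v *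
    ∑ w : Fin K → Y, (∏ i, c (v i) (w i)) * (if acc w = ψ then 1 else 0)
open Classical in
noncomputable def klE {Z : Type*} [Fintype Z] (ω ρ : Z → ℝ) : EReal :=
  if ∀ z, ω z ≠ 0 → ρ z ≠ 0 then ((∑ z, ω z * Real.log (ω z / ρ z) : ℝ) : EReal) else ⊤

noncomputable def KL {Y : Type*} [Fintype Y] (ω ρ : Y → ℝ) : ℝ :=
  ∑ y, ω y * Real.log (ω y / ρ y)

theorem stmt8 {Y : Type*} [Fintype Y] [DecidableEq Y] (K : ℕ) (hK : 1 ≤ K)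
    (σ σ' : Y → ℝ) (hσ : IsDist σ) (hσ' : IsDist σ') (ψ : Sym Y K)
    (hpos : ∀ y, 0 < (ψ : Multiset Y).count y → 0 < σ y)
    (hpos' : ∀ y, 0 < (ψ : Multiset Y).count y → 0 < σ' y) :
    multinom K σ ψ ≤ multinom K σ' ψ ↔ KL (flrn K ψ) σ' ≤ KL (flrn K ψ) σ := by
  classical
  have hKpos : (0:ℝ) < K := by exact_mod_cast hK
  set n : Y → ℕ := fun y => (ψ : Multiset Y).count y with hn
  have hc : 0 < coefm K ψ := by
    unfold coefm
    apply div_pos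
    · exact_mod_cast Nat.factorial_pos K
    · exact Finset.prod_pos fun y _ => by exact_mod_cast Nat.factorial_pos _
  have hP : 0 < ∏ y, σ y ^ n y := Finset.prod_pos fun y _ => by
    rcases Nat.eq_zero_or_pos (n y) with h | h
    · simp [h]
    · exact pow_pos (hpos y h) _
  have hP' : 0 < ∏ y, σ' y ^ n y := Finset.prod_pos fun y _ => by
    rcases Nat.eq_zero_or_pos (n y) with h | h
    · simp [h]
    · exact pow_pos (hpos' y h) _
  have hlogP : Real.log (∏ y, σ y ^ n y) = ∑ y, (n y : ℝ) * Real.log (σ y) := by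
    rw [Real.log_prod]
    · exact Finset.sum_congr rfl fun y _ => Real.log_pow _ _
    · intro y _
      rcases Nat.eq_zero_or_pos (n y) with h | h
      · simp [h]
      · exact pow_ne_zero _ (ne_of_gt (hpos y h))
  have hlogP' : Real.log (∏ y, σ' y ^ n y) = ∑ y, (n y : ℝ) * Real.log (σ' y) := by
    rw [Real.log_prod]
    · exact Finset.sum_congr rfl fun y _ => Real.log_pow _ _
    · intro y _
      rcases Nat.eq_zero_or_pos (n y) with h | h
      · simp [h]
      · exact pow_ne_zero _ (ne_of_gt (hpos' y h))
  have hKL : KL (flrn K ψ) σ - KL (flrn K ψ) σ'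
      = (1/K) * ((∑ y, (n y:ℝ) * Real.log (σ' y)) - ∑ y, (n y:ℝ) * Real.log (σ y)) := by
    unfold KL
    rw [← Finset.sum_sub_distrib, ← Finset.sum_sub_distrib, Finset.mul_sum]
    refine Finset.sum_congr rfl fun y _ => ?_
    rcases Nat.eq_zero_or_pos (n y) with h | h
    · have h0 : flrn K ψ y = 0 := by
        simp only [flrn]
        rw [show Multiset.count y (ψ : Multiset Y) = 0 from h]
        simp
      rw [h0]
      simp [h]
    · have hf : flrn K ψ y = (n y : ℝ)/K := rfl
      have hfpos : (0:ℝ) < flrn K ψ y := by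
        rw [hf]
        exact div_pos (by exact_mod_cast h) hKpos
      rw [Real.log_div (ne_of_gt hfpos) (ne_of_gt (hpos y h)),
          Real.log_div (ne_of_gt hfpos) (ne_of_gt (hpos' y h)), hf]
      ring
  have key : multinom K σ ψ ≤ multinom K σ' ψ ↔
      (∑ y, (n y:ℝ) * Real.log (σ y)) ≤ ∑ y, (n y:ℝ) * Real.log (σ' y) := by
    unfold multinom
    rw [mul_le_mul_iff_right₀ hc, ← hlogP, ← hlogP', Real.log_le_log_iff hP hP']
  rw [key]
  constructor
  · intro hA
    have : 0 ≤ KL (flrn K ψ) σ - KL (flrn K ψ) σ' := by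
      rw [hKL]
      apply mul_nonneg (by positivity)
      linarith
    linarith
  · intro hkl
    have h0 : 0 ≤ (1/K:ℝ) * ((∑ y, (n y:ℝ) * Real.log (σ' y)) - ∑ y, (n y:ℝ) * Real.log (σ y)) := by
      rw [← hKL]; linarith
    nlinarith [mul_pos hKpos (show (0:ℝ) < 1/K by positivity)]
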